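/- Anytime Bernstein inequality, first form (Lemma B.3 of the paper): Let (X_i)_{i≥1} be a sequence of i.i.d. real random variables with X_i ∈ [0, B] almost surely, for a fixed constant B > 0, and let μ = E[X_1]. Then for every δ ∈ (0,1), with probability at least 1 − δ, simultaneously for all n ≥ 1: |Σ_{i=1}^n (X_i − μ)| ≤ 2·√(B·μ·n·ln(2n/δ)) + B·ln(2n/δ). -/

import Mathlib

open MeasureTheory ProbabilityTheory Finset
open Real
open scoped ENNReal



/-- generic: if f 0 = 0 and f has nonneg derivative on [0,∞), then f ≥ 0 there. -/
lemma aux_nonneg_of_deriv (f f' : ℝ → ℝ)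
    (hf : ∀ x ∈ Set.Ici (0:ℝ), HasDerivAt f (f' x) x)
    (hf' : ∀ x ∈ Set.Ici (0:ℝ), 0 ≤ f' x) (h0 : f 0 = 0) {s : ℝ} (hs : 0 ≤ s) :
    0 ≤ f s := by
  have hmono : MonotoneOn f (Set.Ici (0:ℝ)) := by
    apply monotoneOn_of_deriv_nonneg (convex_Ici 0)
    · exact fun x hx => (hf x hx).continuousAt.continuousWithinAt
    · intro x hx
      rw [interior_Ici] at hx
      exact (hf x (Set.mem_Ici.2 (le_of_lt hx))).differentiableAt.differentiableWithinAt
    · intro x hx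
      rw [interior_Ici] at hx
      rw [(hf x (Set.mem_Ici.2 hx.le)).deriv]
      exact hf' x (Set.mem_Ici.2 hx.le)
  calc (0:ℝ) = f 0 := h0.symm
  _ ≤ f s := hmono (Set.mem_Ici.2 (le_refl 0)) (Set.mem_Ici.2 hs) hs

lemma aux_log_ineq {s : ℝ} (hs : 0 ≤ s) :
    3*s^2 + 2*s ≤ 2*(1+s)^2 * Real.log (1+s) := by
  have key : 0 ≤ 2*(1+s)^2 * Real.log (1+s) - (3*s^2 + 2*s) := by
    apply aux_nonneg_of_deriv (fun x => 2*(1+x)^2 * Real.log (1+x) - (3*x^2 + 2*x))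
      (fun x => (4*(1+x) * Real.log (1+x) + 2*(1+x)) - (6*x + 2)) _ _ (by norm_num) hs
    · intro x hx
      have hx1 : (0:ℝ) < 1 + x := by simp at hx; linarith
      have h1 : HasDerivAt (fun x : ℝ => 2*(1+x)^2 * Real.log (1+x))
          (4*(1+x) * Real.log (1+x) + 2*(1+x)) x := by
        have ha : HasDerivAt (fun x : ℝ => 2*(1+x)^2) (4*(1+x)) x := by
          have : HasDerivAt (fun x : ℝ => 1+x) 1 x := (hasDerivAt_id x).const_add 1
          have h := (this.pow 2).const_mul 2
          exact h.congr_deriv (by rw [show (2:ℕ) - 1 = 1 from rfl]; push_cast; ring)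
        have hb : HasDerivAt (fun x : ℝ => Real.log (1+x)) (1/(1+x)) x := by
          have : HasDerivAt (fun x : ℝ => 1+x) 1 x := (hasDerivAt_id x).const_add 1
          exact ((Real.hasDerivAt_log hx1.ne').comp x this).congr_deriv (by simp)
        have := ha.mul hb
        exact this.congr_deriv (by field_simp)
      have h2 : HasDerivAt (fun x : ℝ => 3*x^2 + 2*x) (6*x + 2) x := by
        have hsq : HasDerivAt (fun x : ℝ => 3*x^2) (6*x) x := by
          have h := ((hasDerivAt_id x).pow 2).const_mul 3
          exact h.congr_deriv (by rw [show (2:ℕ) - 1 = 1 from rfl]; simp only [id, pow_one, mul_one]; push_cast; ring)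
        exact (hsq.add ((hasDerivAt_id x).const_mul 2)).congr_deriv (by ring)
      exact h1.sub h2
    · intro x hx
      simp only [Set.mem_Ici] at hx
      have hx1 : (0:ℝ) < 1 + x := by linarith
      have hlog : 1 - (1+x)⁻¹ ≤ Real.log (1+x) := Real.one_sub_inv_le_log_of_pos hx1
      have h2 : x / (1+x) ≤ Real.log (1+x) := by
        rw [div_eq_mul_inv]
        have : 1 - (1+x)⁻¹ = x * (1+x)⁻¹ := by field_simp; ring
        linarith [this ▸ hlog]
      have h3 : x ≤ (1+x) * Real.log (1+x) := by
        have := mul_le_mul_of_nonneg_left h2 hx1.le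
        rwa [mul_div_cancel₀ _ hx1.ne'] at this
      show 0 ≤ 4*(1+x) * Real.log (1+x) + 2*(1+x) - (6*x + 2)
      nlinarith [Real.log_nonneg (by linarith : (1:ℝ) ≤ 1 + x)]
  linarith

lemma aux_exp_neg {x : ℝ} (hx : 0 ≤ x) : Real.exp (-x) ≤ 1 - x + x^2/2 := by
  have key : 0 ≤ 1 - x + x^2/2 - Real.exp (-x) := by
    apply aux_nonneg_of_deriv (fun x => 1 - x + x^2/2 - Real.exp (-x))
      (fun x => (-1 + x) + Real.exp (-x)) _ _ (by norm_num) hx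
    · intro x _
      have h1 : HasDerivAt (fun x : ℝ => 1 - x + x^2/2) (-1 + x) x := by
        have ha : HasDerivAt (fun x : ℝ => 1 - x) (-1) x := by
          exact (hasDerivAt_id x).const_sub 1
        have hb : HasDerivAt (fun x : ℝ => x^2/2) x x := by
          simpa using ((hasDerivAt_id x).pow 2).div_const 2
        exact ha.add hb
      have h2 : HasDerivAt (fun x : ℝ => Real.exp (-x)) (-Real.exp (-x)) x := by
        have : HasDerivAt (fun x : ℝ => -x) (-1) x := by
          exact (hasDerivAt_id x).neg
        exact ((Real.hasDerivAt_exp (-x)).comp x this).congr_deriv (by ring)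
      exact (h1.sub h2).congr_deriv (by ring)
    · intro x hx
      simp only [Set.mem_Ici] at hx
      have := Real.add_one_le_exp (-x)
      show 0 ≤ (-1 + x) + Real.exp (-x)
      linarith
  linarith

lemma aux_exp_convex {θ u : ℝ} (h0 : 0 ≤ θ) (h1 : θ ≤ 1) :
    Real.exp (θ * u) ≤ 1 - θ + θ * Real.exp u := by
  have := convexOn_exp.2 (Set.mem_univ (0:ℝ)) (Set.mem_univ u)
    (by linarith : (0:ℝ) ≤ 1 - θ) h0 (by ring)
  simpa using this

lemma aux_int_bdd {Ω : Type*} {m0 : MeasurableSpace Ω} {μ : Measure Ω} [IsProbabilityMeasure μ]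
    {Y : Ω → ℝ} {B : ℝ} (hY : Measurable Y)
    (hb : ∀ᵐ ω ∂μ, Y ω ∈ Set.Icc (0:ℝ) B) : Integrable Y μ := by
  refine Integrable.mono' (integrable_const B) hY.aestronglyMeasurable ?_
  filter_upwards [hb] with ω hω
  rw [Real.norm_eq_abs, abs_le]
  exact ⟨by linarith [hω.1, hω.2], hω.2⟩

lemma aux_int_exp {Ω : Type*} {m0 : MeasurableSpace Ω} {μ : Measure Ω} [IsProbabilityMeasure μ]
    {Y : Ω → ℝ} {B lam : ℝ} (hY : Measurable Y)
    (hb : ∀ᵐ ω ∂μ, Y ω ∈ Set.Icc (0:ℝ) B) :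
    Integrable (fun ω => Real.exp (lam * Y ω)) μ := by
  refine Integrable.mono' (integrable_const (Real.exp (|lam| * B))) 
    ((hY.const_mul lam).exp).aestronglyMeasurable ?_
  filter_upwards [hb] with ω hω
  rw [Real.norm_eq_abs, abs_of_pos (Real.exp_pos _), Real.exp_le_exp]
  calc lam * Y ω ≤ |lam * Y ω| := le_abs_self _
  _ = |lam| * |Y ω| := abs_mul _ _
  _ ≤ |lam| * B := by
      have : |Y ω| ≤ B := abs_le.2 ⟨by linarith [hω.1, hω.2], hω.2⟩
      exact mul_le_mul_of_nonneg_left this (abs_nonneg _)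

lemma aux_mgf_upper {Ω : Type*} {m0 : MeasurableSpace Ω} {μ : Measure Ω} [IsProbabilityMeasure μ]
    {Y : Ω → ℝ} {B : ℝ} (hB : 0 < B) (hY : Measurable Y)
    (hb : ∀ᵐ ω ∂μ, Y ω ∈ Set.Icc (0:ℝ) B) {lam : ℝ} (hlam : 0 ≤ lam) :
    mgf Y μ lam ≤ Real.exp ((∫ ω, Y ω ∂μ) / B * (Real.exp (lam * B) - 1)) := by
  have hYint : Integrable Y μ := aux_int_bdd hY hb
  set c : ℝ := Real.exp (lam * B) - 1 with hc
  have hc0 : 0 ≤ c := by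
    have : (1:ℝ) ≤ Real.exp (lam * B) := by
      rw [← Real.exp_zero]; exact Real.exp_le_exp.2 (mul_nonneg hlam hB.le)
    simp only [hc]; linarith
  have hpt : ∀ᵐ ω ∂μ, Real.exp (lam * Y ω) ≤ 1 + c / B * Y ω := by
    filter_upwards [hb] with ω hω
    have hθ0 : 0 ≤ Y ω / B := div_nonneg hω.1 hB.le
    have hθ1 : Y ω / B ≤ 1 := (div_le_one hB).2 hω.2
    have := aux_exp_convex (u := lam * B) hθ0 hθ1
    have heq : Y ω / B * (lam * B) = lam * Y ω := by field_simp
    rw [heq] at this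
    calc Real.exp (lam * Y ω) ≤ 1 - Y ω / B + Y ω / B * Real.exp (lam * B) := this
    _ = 1 + c / B * Y ω := by field_simp; rw [hc, mul_comm lam B]; ring
  have hint : mgf Y μ lam ≤ 1 + c / B * (∫ ω, Y ω ∂μ) := by
    have h1 : mgf Y μ lam = ∫ ω, Real.exp (lam * Y ω) ∂μ := rfl
    rw [h1]
    calc ∫ ω, Real.exp (lam * Y ω) ∂μ ≤ ∫ ω, (1 + c / B * Y ω) ∂μ := by
          refine integral_mono_ae (aux_int_exp hY hb) ?_ hpt
          exact (integrable_const 1).add (hYint.const_mul _)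
    _ = 1 + c / B * (∫ ω, Y ω ∂μ) := by
          rw [integral_add (integrable_const 1) (hYint.const_mul _), integral_const,
            integral_const_mul]
          simp
  calc mgf Y μ lam ≤ 1 + c / B * (∫ ω, Y ω ∂μ) := hint
  _ = (∫ ω, Y ω ∂μ) / B * c + 1 := by ring
  _ ≤ Real.exp ((∫ ω, Y ω ∂μ) / B * c) := Real.add_one_le_exp _

lemma aux_mgf_lower {Ω : Type*} {m0 : MeasurableSpace Ω} {μ : Measure Ω} [IsProbabilityMeasure μ]
    {Y : Ω → ℝ} {B : ℝ} (hB : 0 < B) (hY : Measurable Y)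
    (hb : ∀ᵐ ω ∂μ, Y ω ∈ Set.Icc (0:ℝ) B) {lam : ℝ} (hlam : lam ≤ 0) :
    mgf Y μ lam ≤ Real.exp (lam * (∫ ω, Y ω ∂μ) + lam^2 * B * (∫ ω, Y ω ∂μ) / 2) := by
  have hYint : Integrable Y μ := aux_int_bdd hY hb
  have hpt : ∀ᵐ ω ∂μ, Real.exp (lam * Y ω) ≤ 1 + (lam + lam^2 * B / 2) * Y ω := by
    filter_upwards [hb] with ω hω
    have hx : 0 ≤ -(lam * Y ω) := by
      rcases hω with ⟨h1, _⟩
      have := mul_nonpos_of_nonpos_of_nonneg hlam h1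
      linarith
    have h2 := aux_exp_neg hx
    rw [neg_neg] at h2
    have hsq : (lam * Y ω)^2 ≤ lam^2 * B * Y ω := by
      have : Y ω^2 ≤ B * Y ω := by nlinarith [hω.1, hω.2]
      nlinarith [sq_nonneg lam]
    calc Real.exp (lam * Y ω) ≤ 1 - -(lam * Y ω) + (-(lam * Y ω))^2/2 := h2
    _ = 1 + lam * Y ω + (lam * Y ω)^2/2 := by ring
    _ ≤ 1 + (lam + lam^2 * B / 2) * Y ω := by nlinarith
  have hint : mgf Y μ lam ≤ 1 + (lam + lam^2 * B / 2) * (∫ ω, Y ω ∂μ) := by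
    calc mgf Y μ lam ≤ ∫ ω, (1 + (lam + lam^2 * B / 2) * Y ω) ∂μ := by
          refine integral_mono_ae (aux_int_exp hY hb) ?_ hpt
          exact (integrable_const 1).add (hYint.const_mul _)
    _ = 1 + (lam + lam^2 * B / 2) * (∫ ω, Y ω ∂μ) := by
          rw [integral_add (integrable_const 1) (hYint.const_mul _), integral_const,
            integral_const_mul]
          simp
  calc mgf Y μ lam ≤ 1 + (lam + lam^2 * B / 2) * (∫ ω, Y ω ∂μ) := hint
  _ = (lam * (∫ ω, Y ω ∂μ) + lam^2 * B * (∫ ω, Y ω ∂μ) / 2) + 1 := by ring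
  _ ≤ _ := Real.add_one_le_exp _

section chernoff
variable {Ω : Type*} {m0 : MeasurableSpace Ω} {μ : Measure Ω} [IsProbabilityMeasure μ]
    {X : ℕ → Ω → ℝ} {B : ℝ}

lemma aux_sum_bdd (hbound : ∀ i, ∀ᵐ ω ∂μ, X i ω ∈ Set.Icc (0 : ℝ) B) (n : ℕ) :
    ∀ᵐ ω ∂μ, (∑ i ∈ Finset.Icc 1 n, X i) ω ∈ Set.Icc (0:ℝ) (n * B) := by
  filter_upwards [ae_all_iff.2 hbound] with ω hω
  rw [Finset.sum_apply]
  constructor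
  · exact Finset.sum_nonneg fun i _ => (hω i).1
  · calc ∑ i ∈ Finset.Icc 1 n, X i ω ≤ ∑ _i ∈ Finset.Icc 1 n, B :=
        Finset.sum_le_sum fun i _ => (hω i).2
    _ = n * B := by rw [Finset.sum_const, Nat.card_Icc]; simp [nsmul_eq_mul]

lemma aux_mgf_pow (hmeas : ∀ i, Measurable (X i))
    (hindep : iIndepFun X μ)
    (hident : ∀ i, IdentDistrib (X i) (X 1) μ μ)
    (n : ℕ) {lam c : ℝ} (hmgf : mgf (X 1) μ lam ≤ Real.exp c) :
    mgf (∑ i ∈ Finset.Icc 1 n, X i) μ lam ≤ Real.exp (n * c) := by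
  rw [hindep.mgf_sum hmeas]
  have hident_mgf : ∀ i, mgf (X i) μ lam = mgf (X 1) μ lam := by
    intro i
    exact ((hident i).comp (measurable_exp.comp (measurable_const_mul lam))).integral_eq
  calc ∏ i ∈ Finset.Icc 1 n, mgf (X i) μ lam = (mgf (X 1) μ lam) ^ n := by
        rw [Finset.prod_congr rfl fun i _ => hident_mgf i, Finset.prod_const, Nat.card_Icc]
        simp
  _ ≤ (Real.exp c) ^ n := pow_le_pow_left₀ (mgf_nonneg) hmgf n
  _ = Real.exp (n * c) := by rw [← Real.exp_nat_mul]

lemma aux_chernoff_ge (hmeas : ∀ i, Measurable (X i))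
    (hindep : iIndepFun X μ)
    (hident : ∀ i, IdentDistrib (X i) (X 1) μ μ)
    (hbound : ∀ i, ∀ᵐ ω ∂μ, X i ω ∈ Set.Icc (0 : ℝ) B)
    (n : ℕ) {lam c : ℝ} (ε : ℝ) (hlam : 0 ≤ lam)
    (hmgf : mgf (X 1) μ lam ≤ Real.exp c) :
    (μ {ω | ε ≤ ∑ i ∈ Finset.Icc 1 n, X i ω}).toReal ≤ Real.exp (n * c - lam * ε) := by
  have hint : Integrable (fun ω => Real.exp (lam * (∑ i ∈ Finset.Icc 1 n, X i) ω)) μ :=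
    by
      have hSmeas : Measurable (∑ i ∈ Finset.Icc 1 n, X i) := by
        have heq : (∑ i ∈ Finset.Icc 1 n, X i) = fun a => ∑ i ∈ Finset.Icc 1 n, X i a :=
          funext fun a => Finset.sum_apply _ _ _
        rw [heq]
        exact Finset.measurable_sum _ fun i _ => hmeas i
      exact aux_int_exp hSmeas (aux_sum_bdd hbound n)
  have h := measure_ge_le_exp_mul_mgf (X := ∑ i ∈ Finset.Icc 1 n, X i) (μ := μ) ε hlam hint
  have hset : {ω | ε ≤ ∑ i ∈ Finset.Icc 1 n, X i ω} =
      {ω | ε ≤ (∑ i ∈ Finset.Icc 1 n, X i) ω} := by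
    ext ω; simp [Finset.sum_apply]
  rw [hset]
  calc (μ {ω | ε ≤ (∑ i ∈ Finset.Icc 1 n, X i) ω}).toReal
      ≤ Real.exp (-lam * ε) * mgf (∑ i ∈ Finset.Icc 1 n, X i) μ lam := h
  _ ≤ Real.exp (-lam * ε) * Real.exp (n * c) := by
      exact mul_le_mul_of_nonneg_left (aux_mgf_pow hmeas hindep hident n hmgf)
        (Real.exp_pos _).le
  _ = Real.exp (n * c - lam * ε) := by rw [← Real.exp_add]; ring_nf

lemma aux_chernoff_le (hmeas : ∀ i, Measurable (X i))
    (hindep : iIndepFun X μ)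
    (hident : ∀ i, IdentDistrib (X i) (X 1) μ μ)
    (hbound : ∀ i, ∀ᵐ ω ∂μ, X i ω ∈ Set.Icc (0 : ℝ) B)
    (n : ℕ) {lam c : ℝ} (ε : ℝ) (hlam : lam ≤ 0)
    (hmgf : mgf (X 1) μ lam ≤ Real.exp c) :
    (μ {ω | ∑ i ∈ Finset.Icc 1 n, X i ω ≤ ε}).toReal ≤ Real.exp (n * c - lam * ε) := by
  have hint : Integrable (fun ω => Real.exp (lam * (∑ i ∈ Finset.Icc 1 n, X i) ω)) μ :=
    by
      have hSmeas : Measurable (∑ i ∈ Finset.Icc 1 n, X i) := by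
        have heq : (∑ i ∈ Finset.Icc 1 n, X i) = fun a => ∑ i ∈ Finset.Icc 1 n, X i a :=
          funext fun a => Finset.sum_apply _ _ _
        rw [heq]
        exact Finset.measurable_sum _ fun i _ => hmeas i
      exact aux_int_exp hSmeas (aux_sum_bdd hbound n)
  have h := measure_le_le_exp_mul_mgf (X := ∑ i ∈ Finset.Icc 1 n, X i) (μ := μ) ε hlam hint
  have hset : {ω | ∑ i ∈ Finset.Icc 1 n, X i ω ≤ ε} =
      {ω | (∑ i ∈ Finset.Icc 1 n, X i) ω ≤ ε} := by
    ext ω; simp [Finset.sum_apply]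
  rw [hset]
  calc (μ {ω | (∑ i ∈ Finset.Icc 1 n, X i) ω ≤ ε}).toReal
      ≤ Real.exp (-lam * ε) * mgf (∑ i ∈ Finset.Icc 1 n, X i) μ lam := h
  _ ≤ Real.exp (-lam * ε) * Real.exp (n * c) := by
      exact mul_le_mul_of_nonneg_left (aux_mgf_pow hmeas hindep hident n hmgf)
        (Real.exp_pos _).le
  _ = Real.exp (n * c - lam * ε) := by rw [← Real.exp_add]; ring_nf

end chernoff

set_option maxHeartbeats 1000000 in
lemma aux_tail_n {Ω : Type*} {m0 : MeasurableSpace Ω} {μ : Measure Ω} [IsProbabilityMeasure μ]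
    (X : ℕ → Ω → ℝ) (B : ℝ) (hB : 0 < B)
    (hmeas : ∀ i, Measurable (X i))
    (hindep : iIndepFun X μ)
    (hident : ∀ i, IdentDistrib (X i) (X 1) μ μ)
    (hbound : ∀ i, ∀ᵐ ω ∂μ, X i ω ∈ Set.Icc (0 : ℝ) B)
    (m : ℝ) (hm : m = ∫ ω, X 1 ω ∂μ) (hmpos : 0 < m)
    (δ : ℝ) (hδ0 : 0 < δ) (hδ1 : δ < 1)
    (n : ℕ) (hn : 1 ≤ n) :
    μ {ω | ¬ |∑ i ∈ Finset.Icc 1 n, (X i ω - m)| ≤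
        2 * Real.sqrt (B * m * n * Real.log (2 * n / δ)) + B * Real.log (2 * n / δ)} ≤
      ENNReal.ofReal (δ^2 / (2 * n^2)) := by
  have hn1 : (1:ℝ) ≤ n := by exact_mod_cast hn
  have hn0 : (0:ℝ) < n := by linarith
  set L : ℝ := Real.log (2 * n / δ) with hLdef
  have hL : 0 < L := by
    apply Real.log_pos
    rw [lt_div_iff₀ hδ0]
    nlinarith
  set s : ℝ := Real.sqrt (B * L / (m * n)) with hsdef
  have hs0 : 0 < s := Real.sqrt_pos.2 (by positivity)
  have hs2 : s ^ 2 = B * L / (m * n) := Real.sq_sqrt (by positivity)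
  have hBL : m * n * s ^ 2 = B * L := by
    rw [hs2]; field_simp
  have hsqrt : Real.sqrt (B * m * n * L) = n * m * s := by
    rw [show B * m * (n:ℝ) * L = ((n:ℝ) * m * s) ^ 2 by linear_combination (-((n:ℝ) * m)) * hBL]
    exact Real.sqrt_sq (by positivity)
  set t : ℝ := 2 * Real.sqrt (B * m * n * L) + B * L with htdef
  have ht0 : 0 < t := by
    have : 0 ≤ Real.sqrt (B * m * n * L) := Real.sqrt_nonneg _
    have : 0 < B * L := by positivity
    simp only [htdef]; linarith [Real.sqrt_nonneg (B * m * (n:ℝ) * L)]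
  have hexp2L : Real.exp (-(2 * L)) = δ^2 / (4 * n^2) := by
    have h1 : Real.exp L = 2 * n / δ := Real.exp_log (by positivity)
    rw [show -(2*L) = -(L + L) by ring, Real.exp_neg, Real.exp_add, h1]
    field_simp
    ring
  -- upper tail
  set lamU : ℝ := 2 * Real.log (1 + s) / B with hlamU
  have hlogs : 0 < Real.log (1 + s) := Real.log_pos (by linarith)
  have hlamU0 : 0 ≤ lamU := by positivity
  have hexpU : Real.exp (lamU * B) = (1 + s) ^ 2 := by
    rw [show lamU * B = 2 * Real.log (1 + s) by rw [hlamU, div_mul_cancel₀ _ hB.ne'],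
      show (2:ℝ) * Real.log (1+s) = Real.log (1+s) + Real.log (1+s) by ring,
      Real.exp_add, Real.exp_log (by linarith)]
    ring
  have hmgfU : mgf (X 1) μ lamU ≤ Real.exp (m / B * (Real.exp (lamU * B) - 1)) := by
    have := aux_mgf_upper hB (hmeas 1) (hbound 1) hlamU0
    rwa [← hm] at this
  set lamL : ℝ := -(t / (B * m * n)) with hlamL
  have hlamL0 : lamL ≤ 0 := by
    simp only [hlamL, neg_nonpos]
    positivity
  have hmgfL : mgf (X 1) μ lamL ≤ Real.exp (lamL * m + lamL^2 * B * m / 2) := by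
    have := aux_mgf_lower hB (hmeas 1) (hbound 1) hlamL0
    rwa [← hm] at this
  clear_value L s t lamU lamL
  have hBne : B ≠ 0 := ne_of_gt hB
  have hmne : m ≠ 0 := ne_of_gt hmpos
  have hnne : (n:ℝ) ≠ 0 := ne_of_gt hn0
  have hup : (μ {ω | n * m + t ≤ ∑ i ∈ Finset.Icc 1 n, X i ω}).toReal ≤
      Real.exp (-(2 * L)) := by
    have h := aux_chernoff_ge hmeas hindep hident hbound n (n * m + t) hlamU0 hmgfU
    refine h.trans (Real.exp_le_exp.2 ?_)
    have hkey := aux_log_ineq hs0.le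
    have heq : (n:ℝ) * (m / B * (Real.exp (lamU * B) - 1)) - lamU * (n * m + t) =
        (n * m / B) * ((2*s + s^2) - 2 * Real.log (1+s) * (1+s)^2) := by
      rw [hexpU, htdef, hsqrt, hlamU, show B * L = m * n * s^2 from hBL.symm]
      field_simp
      ring
    rw [heq]
    have h2 : (2*s + s^2) - 2 * Real.log (1+s) * (1+s)^2 ≤ -(2 * s^2) := by nlinarith
    calc (n * m / B) * ((2*s + s^2) - 2 * Real.log (1+s) * (1+s)^2)
        ≤ (n * m / B) * (-(2 * s^2)) := by
          apply mul_le_mul_of_nonneg_left h2 (by positivity)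
    _ = -(2 * (m * n * s^2)) / B := by ring
    _ = -(2 * L) := by rw [hBL]; field_simp
  -- lower tail
  have hlow : (μ {ω | ∑ i ∈ Finset.Icc 1 n, X i ω ≤ n * m - t}).toReal ≤
      Real.exp (-(2 * L)) := by
    have h := aux_chernoff_le hmeas hindep hident hbound n (n * m - t) hlamL0 hmgfL
    refine h.trans (Real.exp_le_exp.2 ?_)
    have heq : (n:ℝ) * (lamL * m + lamL^2 * B * m / 2) - lamL * (n * m - t) =
        -(t^2) / (2 * (B * m * n)) := by
      rw [hlamL]
      field_simp
      ring
    rw [heq]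
    have ht2 : 4 * (B * m * n) * L ≤ t^2 := by
      have h1 : 2 * ((n:ℝ) * m * s) ≤ t := by
        rw [htdef, hsqrt]
        nlinarith [hL, hB]
      have h2 : (2*((n:ℝ)*m*s))^2 ≤ t^2 := by
        have ha : 0 ≤ 2*((n:ℝ)*m*s) := by positivity
        nlinarith
      have h3 : (2*((n:ℝ)*m*s))^2 = 4*(B*m*(n:ℝ))*L := by
        linear_combination (4*(n:ℝ)*m)*hBL
      linarith
    have hv : (0:ℝ) < 2 * (B * m * n) := by positivity
    rw [div_le_iff₀ hv]
    nlinarith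
  -- combine
  have hsub : ∀ ω, ∑ i ∈ Finset.Icc 1 n, (X i ω - m) =
      (∑ i ∈ Finset.Icc 1 n, X i ω) - n * m := by
    intro ω
    rw [Finset.sum_sub_distrib, Finset.sum_const, Nat.card_Icc]
    simp [nsmul_eq_mul]
  have hAsub : {ω | ¬ |∑ i ∈ Finset.Icc 1 n, (X i ω - m)| ≤ t} ⊆
      {ω | n * m + t ≤ ∑ i ∈ Finset.Icc 1 n, X i ω} ∪
      {ω | ∑ i ∈ Finset.Icc 1 n, X i ω ≤ n * m - t} := by
    intro ω hω
    simp only [Set.mem_setOf_eq, not_le] at hω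
    rw [hsub ω, lt_abs] at hω
    rcases hω with h | h
    · left; simp only [Set.mem_setOf_eq]; linarith
    · right; simp only [Set.mem_setOf_eq]; linarith
  have hup' : μ {ω | n * m + t ≤ ∑ i ∈ Finset.Icc 1 n, X i ω} ≤
      ENNReal.ofReal (Real.exp (-(2 * L))) :=
    (ENNReal.le_ofReal_iff_toReal_le (measure_ne_top μ _) (Real.exp_pos _).le).2 hup
  have hlow' : μ {ω | ∑ i ∈ Finset.Icc 1 n, X i ω ≤ n * m - t} ≤
      ENNReal.ofReal (Real.exp (-(2 * L))) :=
    (ENNReal.le_ofReal_iff_toReal_le (measure_ne_top μ _) (Real.exp_pos _).le).2 hlow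
  calc μ {ω | ¬ |∑ i ∈ Finset.Icc 1 n, (X i ω - m)| ≤ t}
      ≤ μ ({ω | n * m + t ≤ ∑ i ∈ Finset.Icc 1 n, X i ω} ∪
        {ω | ∑ i ∈ Finset.Icc 1 n, X i ω ≤ n * m - t}) := measure_mono hAsub
  _ ≤ μ {ω | n * m + t ≤ ∑ i ∈ Finset.Icc 1 n, X i ω} +
      μ {ω | ∑ i ∈ Finset.Icc 1 n, X i ω ≤ n * m - t} := measure_union_le _ _
  _ ≤ ENNReal.ofReal (Real.exp (-(2 * L))) + ENNReal.ofReal (Real.exp (-(2 * L))) :=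
      add_le_add hup' hlow'
  _ = ENNReal.ofReal (δ^2 / (2 * n^2)) := by
      rw [← ENNReal.ofReal_add (Real.exp_pos _).le (Real.exp_pos _).le, hexp2L]
      congr 1
      field_simp
      ring

/-- Anytime Bernstein inequality, first form (Lemma B.3): for i.i.d. `X_i ∈ [0,B]` with
mean `m`, with probability at least `1 - δ`, simultaneously for all `n ≥ 1`,
`|∑_{i=1}^n (X_i - m)| ≤ 2√(B m n ln(2n/δ)) + B ln(2n/δ)`. -/
theorem anytime_bernstein_first
    {Ω : Type*} {m0 : MeasurableSpace Ω} {μ : Measure Ω} [IsProbabilityMeasure μ]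
    (X : ℕ → Ω → ℝ) (B : ℝ) (hB : 0 < B)
    (hmeas : ∀ i, Measurable (X i))
    (hindep : iIndepFun X μ)
    (hident : ∀ i, IdentDistrib (X i) (X 1) μ μ)
    (hbound : ∀ i, ∀ᵐ ω ∂μ, X i ω ∈ Set.Icc (0 : ℝ) B)
    (m : ℝ) (hm : m = ∫ ω, X 1 ω ∂μ)
    (δ : ℝ) (hδ0 : 0 < δ) (hδ1 : δ < 1) :
    ENNReal.ofReal (1 - δ) ≤
      μ {ω | ∀ n : ℕ, 1 ≤ n →
        |∑ i ∈ Finset.Icc 1 n, (X i ω - m)| ≤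
          2 * Real.sqrt (B * m * n * Real.log (2 * n / δ)) +
            B * Real.log (2 * n / δ)} := by
  set G : Set Ω := {ω | ∀ n : ℕ, 1 ≤ n →
        |∑ i ∈ Finset.Icc 1 n, (X i ω - m)| ≤
          2 * Real.sqrt (B * m * n * Real.log (2 * n / δ)) +
            B * Real.log (2 * n / δ)} with hG
  have hlognn : ∀ n : ℕ, 1 ≤ n → 0 ≤ Real.log (2 * n / δ) := by
    intro n hn
    apply Real.log_nonneg
    have hn1 : (1:ℝ) ≤ n := by exact_mod_cast hn
    rw [le_div_iff₀ hδ0]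
    nlinarith
  have hm0 : 0 ≤ m := by
    rw [hm]
    exact integral_nonneg_of_ae ((hbound 1).mono fun ω h => h.1)
  rcases eq_or_lt_of_le hm0 with hmz | hmpos
  · -- m = 0
    have hXz : ∀ i : ℕ, ∀ᵐ ω ∂μ, X i ω = 0 := by
      intro i
      have hint : Integrable (X i) μ := aux_int_bdd (hmeas i) (hbound i)
      have hnn : 0 ≤ᵐ[μ] X i := (hbound i).mono fun ω h => h.1
      have hIi : ∫ ω, X i ω ∂μ = 0 := by
        rw [(hident i).integral_eq, ← hm, ← hmz]
      have h := (integral_eq_zero_iff_of_nonneg_ae hnn hint).1 hIi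
      filter_upwards [h] with ω hω using hω
    have hae : ∀ᵐ ω ∂μ, ω ∈ G := by
      filter_upwards [ae_all_iff.2 hXz] with ω hω
      intro n hn
      have hsum : ∑ i ∈ Finset.Icc 1 n, (X i ω - m) = 0 := by
        rw [← hmz]
        simp [hω]
      rw [hsum, abs_zero]
      have h1 : 0 ≤ 2 * Real.sqrt (B * m * n * Real.log (2 * n / δ)) := by positivity
      have h2 : 0 ≤ B * Real.log (2 * n / δ) := mul_nonneg hB.le (hlognn n hn)
      linarith
    have h1 : (1:ℝ≥0∞) ≤ μ G := by
      have h0 : μ {ω | ω ∉ G} = 0 := ae_iff.1 hae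
      calc (1:ℝ≥0∞) = μ Set.univ := measure_univ.symm
      _ ≤ μ (G ∪ {ω | ω ∉ G}) := measure_mono (fun ω _ => by
          by_cases h : ω ∈ G
          exacts [Or.inl h, Or.inr h])
      _ ≤ μ G + μ {ω | ω ∉ G} := measure_union_le _ _
      _ = μ G := by rw [h0, add_zero]
    exact le_trans (ENNReal.ofReal_le_one.2 (by linarith)) h1
  · -- m > 0
    set A : ℕ → Set Ω := fun n => {ω | ¬ |∑ i ∈ Finset.Icc 1 n, (X i ω - m)| ≤
        2 * Real.sqrt (B * m * n * Real.log (2 * n / δ)) + B * Real.log (2 * n / δ)} with hA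
    have htail : ∀ k : ℕ, μ (A (k+1)) ≤ ENNReal.ofReal (δ^2 / (2 * ((k:ℝ)+1)^2)) := by
      intro k
      have := aux_tail_n X B hB hmeas hindep hident hbound m hm hmpos δ hδ0 hδ1 (k+1)
        (Nat.le_add_left 1 k)
      convert this using 3
      push_cast
      ring
    have hU : μ (⋃ k : ℕ, A (k+1)) ≤ ENNReal.ofReal (δ^2) := by
      calc μ (⋃ k : ℕ, A (k+1)) ≤ ∑' k : ℕ, μ (A (k+1)) := measure_iUnion_le _
      _ ≤ ∑' k : ℕ, ENNReal.ofReal (δ^2 / (2 * ((k:ℝ)+1)^2)) := ENNReal.tsum_le_tsum htail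
      _ ≤ ENNReal.ofReal (δ^2) := by
          apply ENNReal.tsum_le_of_sum_range_le
          intro N
          rw [← ENNReal.ofReal_sum_of_nonneg (fun k _ => by positivity)]
          apply ENNReal.ofReal_le_ofReal
          have hterm : ∀ k : ℕ, δ^2 / (2 * ((k:ℝ)+1)^2) ≤
              δ^2 * (1/((k:ℝ)+1) - 1/((k:ℝ)+2)) := by
            intro k
            have h1 : (0:ℝ) < (k:ℝ)+1 := by positivity
            have h2 : (0:ℝ) < (k:ℝ)+2 := by positivity
            have heq : (1:ℝ)/((k:ℝ)+1) - 1/((k:ℝ)+2) = 1/(((k:ℝ)+1)*((k:ℝ)+2)) := by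
              field_simp
              norm_num
            rw [heq, mul_one_div, div_le_div_iff₀ (by positivity) (by positivity)]
            have hkpos : (0:ℝ) ≤ δ^2*((k:ℝ)+1)*k := by positivity
            nlinarith [hkpos]
          calc ∑ k ∈ Finset.range N, δ^2 / (2 * ((k:ℝ)+1)^2)
              ≤ ∑ k ∈ Finset.range N, δ^2 * (1/((k:ℝ)+1) - 1/((k:ℝ)+2)) :=
                Finset.sum_le_sum fun k _ => hterm k
          _ = δ^2 * ∑ k ∈ Finset.range N, ((fun j : ℕ => 1/((j:ℝ)+1)) k -
                (fun j : ℕ => 1/((j:ℝ)+1)) (k+1)) := by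
                rw [Finset.mul_sum]
                congr 1
                ext k
                push_cast
                ring
          _ = δ^2 * ((fun j : ℕ => 1/((j:ℝ)+1)) 0 - (fun j : ℕ => 1/((j:ℝ)+1)) N) := by
                rw [Finset.sum_range_sub' (fun j : ℕ => 1/((j:ℝ)+1)) N]
          _ ≤ δ^2 := by
                simp only [Nat.cast_zero]
                have h3 : (0:ℝ) ≤ 1/((N:ℝ)+1) := by positivity
                nlinarith [sq_nonneg δ]
    have hcover : (1:ℝ≥0∞) ≤ μ G + μ (⋃ k : ℕ, A (k+1)) := by
      calc (1:ℝ≥0∞) = μ Set.univ := measure_univ.symm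
      _ ≤ μ (G ∪ ⋃ k : ℕ, A (k+1)) := measure_mono (fun ω _ => by
          by_cases h : ω ∈ G
          · exact Or.inl h
          · right
            simp only [hG, Set.mem_setOf_eq, not_forall] at h
            obtain ⟨n, hn, hviol⟩ := h
            refine Set.mem_iUnion.2 ⟨n-1, ?_⟩
            have hidx : n - 1 + 1 = n := Nat.succ_pred_eq_of_pos hn
            rw [hidx]
            exact hviol)
      _ ≤ μ G + μ (⋃ k : ℕ, A (k+1)) := measure_union_le _ _
    have hfinal : ENNReal.ofReal (1-δ) + ENNReal.ofReal (δ^2) ≤ μ G + ENNReal.ofReal (δ^2) := by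
      calc ENNReal.ofReal (1-δ) + ENNReal.ofReal (δ^2) = ENNReal.ofReal (1-δ+δ^2) := by
            rw [← ENNReal.ofReal_add (by linarith) (by positivity)]
      _ ≤ 1 := ENNReal.ofReal_le_one.2 (by nlinarith)
      _ ≤ μ G + μ (⋃ k : ℕ, A (k+1)) := hcover
      _ ≤ μ G + ENNReal.ofReal (δ^2) := add_le_add_right hU _
    exact (ENNReal.add_le_add_iff_right ENNReal.ofReal_ne_top).1 hfinal
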